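/- Let G be an affine group scheme of finite type over a field k and X ⊆ O(G) a subspace containing 1. Define O(G)_X to be the largest X-subcomodule of O(G) with its right regular comodule structure. Then O(G)_X is a subcoalgebra of O(G), and O(G)_X ⊆ X; in particular O(G)_X is finite dimensional whenever X is finite dimensional. -/

import Mathlib

open TensorProduct

/-- The coaction `ρ : M → M ⊗ C` factors through `M ⊗ X` for a subspace `X ⊆ C`. -/
def CoactsThrough (k : Type*) {C M : Type*} [CommRing k] [AddCommGroup C] [Module k C]
    [AddCommGroup M] [Module k M]
    (ρ : M →ₗ[k] M ⊗[k] C) (X : Submodule k C) : Prop :=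
  ∀ m : M, ρ m ∈ LinearMap.range (LinearMap.lTensor M X.subtype)

/-- `ρ` is a (counital, coassociative) right `C`-comodule structure on `M`. -/
structure IsComodule (k : Type*) {C M : Type*} [CommRing k] [AddCommGroup C] [Module k C]
    [Coalgebra k C] [AddCommGroup M] [Module k M]
    (ρ : M →ₗ[k] M ⊗[k] C) : Prop where
  counit_comp : ∀ m : M,
    (TensorProduct.rid k M) (LinearMap.lTensor M (Coalgebra.counit (R := k) (A := C)) (ρ m)) = m
  coassoc : ∀ m : M,
    (TensorProduct.assoc k M C C) (LinearMap.rTensor C ρ (ρ m)) =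
      LinearMap.lTensor M (Coalgebra.comul (R := k) (A := C)) (ρ m)

/-- `N ⊆ M` is a subcomodule whose coaction factors through `N ⊗ X`. -/
def IsXSubcomodule (k : Type*) {C M : Type*} [CommRing k] [AddCommGroup C] [Module k C]
    [AddCommGroup M] [Module k M]
    (ρ : M →ₗ[k] M ⊗[k] C) (X : Submodule k C) (N : Submodule k M) : Prop :=
  ∀ m ∈ N, ρ m ∈ LinearMap.range (TensorProduct.map N.subtype X.subtype)

section Aux

variable {k C : Type*} [Field k] [AddCommGroup C] [Module k C]

private lemma range_map_mono_left {p p' q : Submodule k C} (h : p ≤ p') :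
    LinearMap.range (TensorProduct.map p.subtype q.subtype) ≤
      LinearMap.range (TensorProduct.map p'.subtype q.subtype) := by
  rintro u ⟨v, rfl⟩
  refine ⟨TensorProduct.map (Submodule.inclusion h) LinearMap.id v, ?_⟩
  rw [← LinearMap.comp_apply, ← TensorProduct.map_comp, Submodule.subtype_comp_inclusion,
    LinearMap.comp_id]

private lemma tensor_repr {M N : Type*} [AddCommGroup M] [Module k M] [AddCommGroup N]
    [Module k N] {ι : Type*} [DecidableEq ι] (b : Module.Basis ι k M) (v : M ⊗[k] N) :
    ∃ (s : Finset ι) (w : ι → N), v = ∑ i ∈ s, b i ⊗ₜ[k] w i := by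
  induction v with
  | zero => exact ⟨∅, fun _ => 0, by simp⟩
  | tmul m n =>
    refine ⟨(b.repr m).support, fun i => b.repr m i • n, ?_⟩
    conv_lhs => rw [← b.linearCombination_repr m, Finsupp.linearCombination_apply, Finsupp.sum]
    rw [sum_tmul]
    exact Finset.sum_congr rfl fun i _ => by rw [smul_tmul]
  | add u₁ u₂ ih₁ ih₂ =>
    obtain ⟨s₁, w₁, rfl⟩ := ih₁
    obtain ⟨s₂, w₂, rfl⟩ := ih₂
    refine ⟨s₁ ∪ s₂, fun i => (if i ∈ s₁ then w₁ i else 0) + (if i ∈ s₂ then w₂ i else 0), ?_⟩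
    have h1 : ∀ (s t : Finset ι) (w : ι → N),
        ∑ i ∈ s ∪ t, b i ⊗ₜ[k] (if i ∈ s then w i else 0) = ∑ i ∈ s, b i ⊗ₜ[k] w i := by
      intro s t w
      rw [show (fun i => b i ⊗ₜ[k] (if i ∈ s then w i else 0)) =
          fun i => if i ∈ s then b i ⊗ₜ[k] w i else 0 by
        funext i; split <;> simp]
      rw [Finset.sum_ite_mem, Finset.union_inter_cancel_left]
    symm
    calc ∑ i ∈ s₁ ∪ s₂, b i ⊗ₜ[k] ((if i ∈ s₁ then w₁ i else 0) + (if i ∈ s₂ then w₂ i else 0))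
        = ∑ i ∈ s₁ ∪ s₂, (b i ⊗ₜ[k] (if i ∈ s₁ then w₁ i else 0)
            + b i ⊗ₜ[k] (if i ∈ s₂ then w₂ i else 0)) := by
          simp [tmul_add]
      _ = _ := by
          rw [Finset.sum_add_distrib, h1 s₁ s₂ w₁, Finset.union_comm, h1 s₂ s₁ w₂]

private lemma exists_dual (p : Submodule k C) {ι : Type*} [DecidableEq ι] (b : Module.Basis ι k p)
    (i : ι) : ∃ φ : Module.Dual k C, ∀ j, φ (b j : C) = if j = i then 1 else 0 := by
  obtain ⟨g, hg⟩ := LinearMap.exists_extend (b.coord i)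
  refine ⟨g, fun j => ?_⟩
  have := LinearMap.congr_fun hg (b j)
  simp only [LinearMap.comp_apply, Submodule.subtype_apply] at this
  rw [this, Module.Basis.coord_apply, Module.Basis.repr_self_apply]

end Aux

section Coalg

variable {k C : Type*} [Field k] [AddCommGroup C] [Module k C] [Coalgebra k C]

/-- The contraction of `comul` against a functional on the first tensor factor. -/
private noncomputable def lact (φ : Module.Dual k C) : C →ₗ[k] C :=
  (TensorProduct.lid k C).toLinearMap ∘ₗ (LinearMap.rTensor C φ) ∘ₗ
    (Coalgebra.comul (R := k) (A := C))

private lemma lact_apply (φ : Module.Dual k C) (c : C) :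
    lact φ c = (TensorProduct.lid k C) (LinearMap.rTensor C φ (Coalgebra.comul (R := k) c)) :=
  rfl

private lemma comul_lact (φ : Module.Dual k C) (u : C ⊗[k] C) :
    Coalgebra.comul (R := k) ((TensorProduct.lid k C) (LinearMap.rTensor C φ u)) =
      (TensorProduct.lid k (C ⊗[k] C)) (LinearMap.rTensor (C ⊗[k] C) φ
        (LinearMap.lTensor C (Coalgebra.comul (R := k) (A := C)) u)) := by
  induction u with
  | zero => simp
  | tmul x y => simp
  | add u₁ u₂ h₁ h₂ => simp only [map_add, h₁, h₂]

private lemma contract_assoc (φ : Module.Dual k C) (u : C ⊗[k] C) (x : C) :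
    (TensorProduct.lid k (C ⊗[k] C)) (LinearMap.rTensor (C ⊗[k] C) φ
      ((TensorProduct.assoc k C C C) (u ⊗ₜ[k] x))) =
      ((TensorProduct.lid k C) (LinearMap.rTensor C φ u)) ⊗ₜ[k] x := by
  induction u with
  | zero => simp
  | tmul a b => simp [smul_tmul']
  | add u₁ u₂ h₁ h₂ => simp only [add_tmul, map_add, h₁, h₂]

/-- If `S` is an `X`-subcomodule, so is `S ⊔ span {lact φ d : d ∈ S}`. -/
private lemma sup_span_lact_isXSubcomodule (X S : Submodule k C)
    (hS : ∀ c ∈ S, Coalgebra.comul (R := k) c ∈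
      LinearMap.range (TensorProduct.map S.subtype X.subtype)) :
    IsXSubcomodule k (Coalgebra.comul (R := k) (A := C)) X
      (S ⊔ Submodule.span k
        {y : C | ∃ (φ : Module.Dual k C) (d : C), d ∈ S ∧ y = lact φ d}) := by
  set T := S ⊔ Submodule.span k
    {y : C | ∃ (φ : Module.Dual k C) (d : C), d ∈ S ∧ y = lact φ d} with hTdef
  have hgen : ∀ (φ : Module.Dual k C) (d : C), d ∈ S → lact φ d ∈ T := fun φ d hd =>
    (le_sup_right : _ ≤ T) (Submodule.subset_span ⟨φ, d, hd, rfl⟩)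
  have hkey : ∀ (φ : Module.Dual k C) (d : C), d ∈ S →
      Coalgebra.comul (R := k) (lact φ d) ∈
        LinearMap.range (TensorProduct.map T.subtype X.subtype) := by
    intro φ d hd
    obtain ⟨v, hv⟩ := hS d hd
    have e1 : Coalgebra.comul (R := k) (lact φ d) =
        (TensorProduct.lid k (C ⊗[k] C)) (LinearMap.rTensor (C ⊗[k] C) φ
          ((TensorProduct.assoc k C C C)
            ((Coalgebra.comul (R := k) (A := C)).rTensor C (Coalgebra.comul (R := k) d)))) := by
      rw [lact_apply, comul_lact, ← Coalgebra.coassoc_apply]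
    rw [e1, ← hv]
    clear hv e1
    induction v with
    | zero => simp only [map_zero]; exact Submodule.zero_mem _
    | add u₁ u₂ h₁ h₂ => simp only [map_add]; exact Submodule.add_mem _ h₁ h₂
    | tmul sx x =>
      rw [TensorProduct.map_tmul, LinearMap.rTensor_tmul, contract_assoc]
      exact ⟨(⟨lact φ ↑sx, hgen φ ↑sx sx.2⟩ : ↥T) ⊗ₜ[k] (⟨↑x, x.2⟩ : ↥X),
        by simp [lact_apply]⟩
  have hle : T ≤ Submodule.comap (Coalgebra.comul (R := k) (A := C))
      (LinearMap.range (TensorProduct.map T.subtype X.subtype)) := by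
    rw [hTdef]
    refine sup_le (fun c hc => ?_) (Submodule.span_le.2 ?_)
    · exact range_map_mono_left le_sup_left (hS c hc)
    · rintro y ⟨φ, d, hd, rfl⟩
      exact hkey φ d hd
  exact fun m hm => hle hm

/-- In the maximal `X`-subcomodule, second legs of `comul` can be taken in it. -/
private lemma comul_mem_of_lact_stable (X S : Submodule k C)
    (hS : ∀ c ∈ S, Coalgebra.comul (R := k) c ∈
      LinearMap.range (TensorProduct.map S.subtype X.subtype))
    (hlact : ∀ (φ : Module.Dual k C) (d : C), d ∈ S → lact φ d ∈ S) :
    ∀ c ∈ S, Coalgebra.comul (R := k) c ∈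
      LinearMap.range (TensorProduct.map S.subtype S.subtype) := by
  classical
  intro c hc
  obtain ⟨v, hv⟩ := hS c hc
  obtain ⟨s, w, hw⟩ := tensor_repr (Module.Basis.ofVectorSpace k ↥S) v
  set b := Module.Basis.ofVectorSpace k ↥S with hb
  have hcomul : Coalgebra.comul (R := k) c = ∑ i ∈ s, (↑(b i) : C) ⊗ₜ[k] (↑(w i) : C) := by
    rw [← hv, hw, map_sum]
    exact Finset.sum_congr rfl fun i _ => by simp
  have hwS : ∀ i ∈ s, (↑(w i) : C) ∈ S := by
    intro i hi
    obtain ⟨φ, hφ⟩ := exists_dual S b i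
    have hmem := hlact φ c hc
    have e : lact φ c = ↑(w i) := by
      rw [lact_apply, hcomul, map_sum, map_sum]
      have e2 : ∀ j ∈ s, (TensorProduct.lid k C)
          (LinearMap.rTensor C φ ((↑(b j) : C) ⊗ₜ[k] (↑(w j) : C))) =
          if j = i then (↑(w j) : C) else 0 := by
        intro j _
        rw [LinearMap.rTensor_tmul, TensorProduct.lid_tmul, hφ j]
        split <;> simp
      rw [Finset.sum_congr rfl e2, Finset.sum_ite_eq' s i]
      exact if_pos hi
    rwa [e] at hmem
  refine ⟨∑ i ∈ s.attach, b ↑i ⊗ₜ[k] (⟨↑(w ↑i), hwS ↑i i.2⟩ : ↥S), ?_⟩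
  rw [map_sum]
  calc ∑ i ∈ s.attach,
      TensorProduct.map S.subtype S.subtype (b ↑i ⊗ₜ[k] (⟨↑(w ↑i), hwS ↑i i.2⟩ : ↥S))
      = ∑ i ∈ s.attach, (↑(b ↑i) : C) ⊗ₜ[k] (↑(w ↑i) : C) :=
        Finset.sum_congr rfl fun i _ => by simp
    _ = ∑ i ∈ s, (↑(b i) : C) ⊗ₜ[k] (↑(w i) : C) := Finset.sum_attach s (fun i => (↑(b i) : C) ⊗ₜ[k] (↑(w i) : C))
    _ = Coalgebra.comul (R := k) c := hcomul.symm

end Coalg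

/-- `O(G)_X`, the largest `X`-subcomodule of the right regular comodule `O(G)`,
is a subcoalgebra of `O(G)`, is contained in `X`, and is finite dimensional
whenever `X` is. -/
theorem OGX_subcoalgebra {k C : Type*} [Field k] [CommRing C]
    [HopfAlgebra k C] (X : Submodule k C) (hX : (1 : C) ∈ X) :
    (∀ c ∈ sSup {N : Submodule k C |
        IsXSubcomodule k (Coalgebra.comul (R := k) (A := C)) X N},
      Coalgebra.comul (R := k) c ∈ LinearMap.range (TensorProduct.map
        (sSup {N : Submodule k C |
          IsXSubcomodule k (Coalgebra.comul (R := k) (A := C)) X N}).subtype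
        (sSup {N : Submodule k C |
          IsXSubcomodule k (Coalgebra.comul (R := k) (A := C)) X N}).subtype)) ∧
    sSup {N : Submodule k C |
      IsXSubcomodule k (Coalgebra.comul (R := k) (A := C)) X N} ≤ X ∧
    (FiniteDimensional k ↥X → FiniteDimensional k ↥(sSup {N : Submodule k C |
      IsXSubcomodule k (Coalgebra.comul (R := k) (A := C)) X N})) := by
  set S := sSup {N : Submodule k C |
    IsXSubcomodule k (Coalgebra.comul (R := k) (A := C)) X N} with hSdef
  -- S is itself an X-subcomodule
  have hS : ∀ c ∈ S, Coalgebra.comul (R := k) c ∈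
      LinearMap.range (TensorProduct.map S.subtype X.subtype) := by
    have h : S ≤ Submodule.comap (Coalgebra.comul (R := k) (A := C))
        (LinearMap.range (TensorProduct.map S.subtype X.subtype)) := by
      rw [hSdef]
      refine sSup_le fun N hN => fun c hc => ?_
      exact range_map_mono_left (le_sSup hN) (hN c hc)
    exact fun c hc => h hc
  -- S is stable under contractions
  have hlact : ∀ (φ : Module.Dual k C) (d : C), d ∈ S → lact φ d ∈ S := by
    intro φ d hd
    have hT := sup_span_lact_isXSubcomodule X S hS
    have hTle : (S ⊔ Submodule.span k
        {y : C | ∃ (φ : Module.Dual k C) (d : C), d ∈ S ∧ y = lact φ d}) ≤ S := by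
      rw [hSdef]
      exact le_sSup hT
    exact hTle ((le_sup_right :
      _ ≤ S ⊔ Submodule.span k
        {y : C | ∃ (φ : Module.Dual k C) (d : C), d ∈ S ∧ y = lact φ d})
      (Submodule.subset_span ⟨φ, d, hd, rfl⟩))
  -- S ≤ X
  have hSX : S ≤ X := by
    intro c hc
    obtain ⟨v, hv⟩ := hS c hc
    have key : ∀ v : ↥S ⊗[k] ↥X,
        (TensorProduct.lid k C) ((Coalgebra.counit (R := k) (A := C)).rTensor C
          (TensorProduct.map S.subtype X.subtype v)) ∈ X := by
      intro v
      induction v with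
      | zero => simpa using X.zero_mem
      | tmul sc x => simpa using X.smul_mem _ x.2
      | add u₁ u₂ h₁ h₂ => simp only [map_add]; exact X.add_mem h₁ h₂
    have hx := key v
    rw [hv, Coalgebra.rTensor_counit_comul] at hx
    simpa using hx
  refine ⟨comul_mem_of_lact_stable X S hS hlact, hSX, fun hfin => ?_⟩
  exact Submodule.finiteDimensional_of_le hSX
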